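/- Let 𝔥 be the Lie algebra on ℝ⁷ with structure equations de¹ = 0, de² = 0, de³ = −e³⁷, de⁴ = e⁴⁷, de⁵ = 2 e¹⁴ + e⁵⁷, de⁶ = −2 e²⁴ + e⁶⁷, de⁷ = 0, let φ = e¹²⁷ + e³⁴⁷ + e⁵⁶⁷ + e¹³⁵ − e¹⁴⁶ − e²³⁶ − e²⁴⁵, and let τ = 2 e¹² + 2 e³⁴ − 4 e⁵⁶. Then for the vector X = −4 e₇ ∈ 𝔥 one has d(ι_X φ) = dτ = −8(e¹⁴⁶ + e²⁴⁵ − e⁵⁶⁷). Hence the steady soliton φ satisfies Δ_φφ = L_Xφ for a left-invariant vector field X on the simply connected solvable Lie group with Lie algebra 𝔥. -/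
import Mathlib


/-!
Common framework: unbundled exterior forms on ℝ⁷, wedge product, interior product,
Chevalley–Eilenberg differential of a Lie bracket, induced inner products on forms,
derived series, and the Lie algebras / G₂-structures from the paper
"Laplacian flow solitons on non-solvable Lie groups" (Fino–Raffero).
-/

open scoped BigOperators

namespace G2Solitons

/-- The underlying vector space ℝ⁷. -/
abbrev V7 : Type := Fin 7 → ℝ

/-- Unbundled `k`-forms: real-valued functions of `k` vectors of ℝ⁷. -/
abbrev Form (k : ℕ) : Type := (Fin k → V7) → ℝ

/-- Standard basis of ℝ⁷. -/
def stdB (i : Fin 7) : V7 := fun j => if j = i then 1 else 0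

/-- The basic `k`-form `e^{i₁} ∧ ⋯ ∧ e^{i_k}` (determinant convention, 0-indexed). -/
def eB {k : ℕ} (idx : Fin k → Fin 7) : Form k :=
  fun v => Matrix.det (Matrix.of fun a b : Fin k => v a (idx b))

/-- Wedge product of a `p`-form and a `q`-form (convention
`(α∧β)(v) = (p!q!)⁻¹ ∑_σ sgn σ · α(v∘σ|_{first p}) β(v∘σ|_{last q})`). -/
noncomputable def wedge {p q : ℕ} (α : Form p) (β : Form q) : Form (p + q) := fun v =>
  ((p.factorial * q.factorial : ℕ) : ℝ)⁻¹ *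
    ∑ σ : Equiv.Perm (Fin (p + q)),
      ((Equiv.Perm.sign σ : ℤ) : ℝ) *
        (α (fun i => v (σ (Fin.castAdd q i))) * β (fun j => v (σ (Fin.natAdd p j))))

/-- Interior product of a vector with a `(k+1)`-form. -/
def iprod {k : ℕ} (u : V7) (α : Form (k + 1)) : Form k := fun v => α (Fin.cons u v)

/-- Chevalley–Eilenberg differential of a `(k+1)`-form with respect to a bracket:
`(dα)(x₀,…,x_{k+1}) = ∑_{i<j} (-1)^{i+j} α([xᵢ,xⱼ], x₀,…,x̂ᵢ,…,x̂ⱼ,…,x_{k+1})`. -/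
def dCE {k : ℕ} (br : V7 → V7 → V7) (α : Form (k + 1)) : Form (k + 2) := fun v =>
  ∑ i : Fin (k + 2), ∑ j : Fin (k + 2),
    if (i : ℕ) < (j : ℕ) then
      (-1 : ℝ) ^ ((i : ℕ) + (j : ℕ)) *
        α (Fin.cons (br (v i) (v j)) fun l : Fin k =>
            if (l : ℕ) < (i : ℕ) then v ⟨(l : ℕ), by omega⟩
            else if (l : ℕ) + 1 < (j : ℕ) then v ⟨(l : ℕ) + 1, by omega⟩
            else v ⟨(l : ℕ) + 2, by omega⟩)
    else 0

/-- Inner product on `k`-forms induced by the diagonal metric `g = ∑ᵢ c i (e^i)²`,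
determined by declaring `{(c i₁ ⋯ c i_k)^{-1/2} e^{i₁⋯i_k} : i₁ < ⋯ < i_k}` orthonormal. -/
noncomputable def formInner (c : Fin 7 → ℝ) {k : ℕ} (α β : Form k) : ℝ :=
  ((k.factorial : ℕ) : ℝ)⁻¹ *
    ∑ f : Fin k → Fin 7,
      (∏ i, c (f i))⁻¹ * (α (fun i => stdB (f i)) * β (fun i => stdB (f i)))

/-- Natural action of an endomorphism `D` on a `k`-form:
`(D.α)(v₁,…,v_k) = ∑ᵢ α(v₁,…,D vᵢ,…,v_k)`. -/
def actD {k : ℕ} (D : V7 → V7) (α : Form k) : Form k := fun v =>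
  ∑ i : Fin k, α (Function.update v i (D (v i)))

/-- The Jacobi identity for a bilinear bracket. -/
def Jacobi (br : V7 → V7 → V7) : Prop :=
  ∀ x y z : V7, br (br x y) z + br (br y z) x + br (br z x) y = 0

/-- Unimodularity: `tr (ad x) = 0` for all `x`. -/
def Unimodular (br : V7 → V7 → V7) : Prop :=
  ∀ x : V7, ∑ i : Fin 7, br x (stdB i) i = 0

/-- Derivation property for a map `D`. -/
def IsDeriv (br : V7 → V7 → V7) (D : V7 → V7) : Prop :=
  ∀ x y : V7, D (br x y) = br (D x) y + br x (D y)

/-- Derived series of a bracket. -/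
def derSeries (br : V7 → V7 → V7) : ℕ → Submodule ℝ V7
  | 0 => ⊤
  | n + 1 => Submodule.span ℝ
      {z | ∃ x ∈ derSeries br n, ∃ y ∈ derSeries br n, z = br x y}

/-- Solvability: the derived series terminates at zero. -/
def Solvable (br : V7 → V7 → V7) : Prop := ∃ n, derSeries br n = ⊥

/-- Real cube root (the real root, also for negative arguments). -/
noncomputable def cbrt (x : ℝ) : ℝ :=
  if x < 0 then -((-x) ^ ((1 : ℝ) / 3)) else x ^ ((1 : ℝ) / 3)

/-- The standard volume form `e^{1234567}`. -/
def vol7 : Form 7 := eB ![0, 1, 2, 3, 4, 5, 6]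

end G2Solitons

namespace G2Solitons

noncomputable section

/-- The bracket of the Lie algebra `𝔥` with structure equations
`(0, 0, -e³⁷, e⁴⁷, 2 e¹⁴ + e⁵⁷, -2 e²⁴ + e⁶⁷, 0)`,
via the convention `dα(x,y) = -α([x,y])`. -/
def brH : V7 → V7 → V7 := fun x y =>
  ![0,
    0,
    x 2 * y 6 - x 6 * y 2,
    -(x 3 * y 6 - x 6 * y 3),
    -2 * (x 0 * y 3 - x 3 * y 0) - (x 4 * y 6 - x 6 * y 4),
    2 * (x 1 * y 3 - x 3 * y 1) - (x 5 * y 6 - x 6 * y 5),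
    0]

/-- `φ = e¹²⁷ + e³⁴⁷ + e⁵⁶⁷ + e¹³⁵ - e¹⁴⁶ - e²³⁶ - e²⁴⁵`. -/
def phiH : Form 3 := fun v =>
  eB ![0, 1, 6] v + eB ![2, 3, 6] v + eB ![4, 5, 6] v
    + eB ![0, 2, 4] v - eB ![0, 3, 5] v - eB ![1, 2, 5] v - eB ![1, 3, 4] v

/-- The standard Euclidean metric `g_φ = ∑_{i=1}^{7} (e^i)²`. -/
def gH (u v : V7) : ℝ := ∑ i : Fin 7, u i * v i

/-- `τ = 2 e¹² + 2 e³⁴ - 4 e⁵⁶`. -/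
def tauH : Form 2 := fun v =>
  2 * eB ![0, 1] v + 2 * eB ![2, 3] v - 4 * eB ![4, 5] v

/-- `D = diag(0, 0, -4, 4, 4, 4, 0)`. -/
def DH : V7 → V7 := fun x i => (![0, 0, -4, 4, 4, 4, 0] : Fin 7 → ℝ) i * x i

end

end G2Solitons

namespace G2Solitons


private lemma cons_eq' (u : V7) (f : Fin 1 → V7) : Fin.cons u f = ![u, f 0] := by
  funext x; refine Fin.cases ?_ ?_ x <;> simp [Fin.fin_one_eq_zero]

private lemma dCE_expand (br : V7 → V7 → V7) (α : Form 2) (w : Fin 3 → V7) :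
    dCE br α w = -α ![br (w 0) (w 1), w 2] + α ![br (w 0) (w 2), w 1]
      - α ![br (w 1) (w 2), w 0] := by
  simp [dCE, Fin.sum_univ_succ, cons_eq']
  ring

private lemma iprod_two (u : V7) (α : Form 3) (a b : V7) :
    iprod u α ![a, b] = α ![u, a, b] := rfl

private lemma brH0 (x y : V7) : brH x y 0 = 0 := rfl
private lemma brH1 (x y : V7) : brH x y 1 = 0 := rfl
private lemma brH2 (x y : V7) : brH x y 2 = x 2 * y 6 - x 6 * y 2 := rfl
private lemma brH3 (x y : V7) : brH x y 3 = -(x 3 * y 6 - x 6 * y 3) := rfl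
private lemma brH4 (x y : V7) : brH x y 4 = -2 * (x 0 * y 3 - x 3 * y 0) - (x 4 * y 6 - x 6 * y 4) := rfl
private lemma brH5 (x y : V7) : brH x y 5 = 2 * (x 1 * y 3 - x 3 * y 1) - (x 5 * y 6 - x 6 * y 5) := rfl
private lemma brH6 (x y : V7) : brH x y 6 = 0 := rfl

private lemma X60 : ((-4 : ℝ) • stdB 6) 0 = 0 := by simp [stdB]
private lemma X61 : ((-4 : ℝ) • stdB 6) 1 = 0 := by simp [stdB]
private lemma X62 : ((-4 : ℝ) • stdB 6) 2 = 0 := by simp [stdB]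
private lemma X63 : ((-4 : ℝ) • stdB 6) 3 = 0 := by simp [stdB]
private lemma X64 : ((-4 : ℝ) • stdB 6) 4 = 0 := by simp [stdB]
private lemma X65 : ((-4 : ℝ) • stdB 6) 5 = 0 := by simp [stdB]
private lemma X66 : ((-4 : ℝ) • stdB 6) 6 = -4 := by simp [stdB]

/-- for the left-invariant vector field `X = -4e₇` one has
`d(ι_Xφ) = dτ = -8(e¹⁴⁶ + e²⁴⁵ - e⁵⁶⁷)`, so `Δ_φφ = L_Xφ`. -/
theorem steady_soliton_H_invariant_field :
    (∀ w, dCE brH (iprod ((-4 : ℝ) • stdB 6) phiH) w = dCE brH tauH w) ∧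
    ∀ w, dCE brH tauH w
      = -8 * (eB ![0, 3, 5] w + eB ![1, 3, 4] w - eB ![4, 5, 6] w) := by
  constructor <;> intro w <;>
  · rw [dCE_expand]
    try rw [dCE_expand]
    simp only [iprod_two, tauH, phiH, eB, Matrix.det_fin_two,
      Matrix.det_fin_three, Matrix.of_apply, Matrix.cons_val_zero,
      Matrix.cons_val_one, Matrix.head_cons, Matrix.cons_val_two,
      Matrix.tail_cons, Fin.isValue, Matrix.cons_val_fin_one,
      brH0, brH1, brH2, brH3, brH4, brH5, brH6, X60, X61, X62, X63, X64, X65, X66]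
    norm_num [Matrix.cons_val', Matrix.cons_val_zero, Matrix.cons_val_one,
      Matrix.head_cons, Matrix.cons_val_fin_one, Matrix.empty_val',
      Matrix.cons_val_succ]
    ring


end G2Solitons
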